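/- Let σ be a type and let f ∈ MvPolynomial σ (ZMod 2) be homogeneous of degree d. Then MvPolynomial.homogeneousComponent d (Sq f) = f, and MvPolynomial.homogeneousComponent m (Sq f) = 0 for every m with m < d or m > 2 * d. (Equivalently, in the polynomial model Sq⁰ f = f and Sq^k f = 0 for k > d, the unstability condition.) -/

import Mathlib

open MvPolynomial

/-- The total Steenrod square: the `𝔽₂`-algebra endomorphism sending
each variable `X j` to `X j + (X j)²`. -/
noncomputable def Sq (σ : Type*) :
    MvPolynomial σ (ZMod 2) →ₐ[ZMod 2] MvPolynomial σ (ZMod 2) :=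
  MvPolynomial.aeval fun j => MvPolynomial.X j + (MvPolynomial.X j) ^ 2

section Aux

variable {σ : Type*}

private lemma degree_add' (a b : σ →₀ ℕ) :
    Finsupp.degree (a + b) = Finsupp.degree a + Finsupp.degree b := by
  simp only [Finsupp.degree_eq_weight_one, map_add]

private noncomputable def Rr (s : σ →₀ ℕ) : MvPolynomial σ (ZMod 2) :=
  s.prod fun j k => (1 + X j) ^ k

private lemma sq_monomial (s : σ →₀ ℕ) (c : ZMod 2) :
    Sq σ (monomial s c) = monomial s c * Rr s := by
  rw [Sq, aeval_monomial]
  have h1 : (s.prod fun j k => ((X j : MvPolynomial σ (ZMod 2)) + X j ^ 2) ^ k)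
      = s.prod fun j k => (X j) ^ k * (1 + X j) ^ k := by
    apply Finsupp.prod_congr
    intro j _
    rw [← mul_pow]
    ring_nf
  rw [h1, Finsupp.prod_mul, monomial_eq, Rr, algebraMap_eq]
  ring

private lemma constantCoeff_Rr (s : σ →₀ ℕ) : constantCoeff (Rr s) = 1 := by
  rw [Rr, map_finsuppProd]
  simp [Finsupp.prod]

private lemma totalDegree_Rr (s : σ →₀ ℕ) : (Rr s).totalDegree ≤ s.degree := by
  rw [Rr, Finsupp.prod]
  refine (totalDegree_finset_prod _ _).trans ?_
  rw [Finsupp.degree]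
  apply Finset.sum_le_sum
  intro j _
  refine (totalDegree_pow _ _).trans ?_
  have : (1 + X j : MvPolynomial σ (ZMod 2)).totalDegree ≤ 1 :=
    (totalDegree_add _ _).trans (by simp [totalDegree_X])
  calc s j * (1 + X j : MvPolynomial σ (ZMod 2)).totalDegree
      ≤ s j * 1 := Nat.mul_le_mul_left _ this
    _ = s j := Nat.mul_one _

private lemma coeff_sq_monomial (s u : σ →₀ ℕ) (c : ZMod 2) :
    coeff u (Sq σ (monomial s c)) = if s ≤ u then c * coeff (u - s) (Rr s) else 0 := by
  rw [sq_monomial, coeff_monomial_mul']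

private lemma hc_sq_monomial_self (s : σ →₀ ℕ) (c : ZMod 2) :
    homogeneousComponent s.degree (Sq σ (monomial s c)) = monomial s c := by
  classical
  ext u
  rw [coeff_homogeneousComponent, coeff_monomial]
  split_ifs with h1 h2 h2
  · -- degree u = degree s and s = u
    subst h2
    rw [coeff_sq_monomial, if_pos le_rfl, tsub_self]
    have h0 : coeff (0 : σ →₀ ℕ) (Rr s) = 1 := by
      rw [← constantCoeff_eq]; exact constantCoeff_Rr s
    rw [h0, mul_one]
  · -- degree u = degree s but s ≠ u : show coeff = 0
    rw [coeff_sq_monomial]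
    rw [if_neg]
    intro hle
    apply h2
    obtain ⟨t, rfl⟩ := le_iff_exists_add.mp hle
    have := degree_add' s t
    rw [h1] at this
    have ht : Finsupp.degree t = 0 := by omega
    rw [Finsupp.degree_eq_zero_iff] at ht
    rw [ht, add_zero]
  · exfalso; apply h1; rw [← h2]
  · rfl

private lemma hc_sq_monomial_lo (s : σ →₀ ℕ) (c : ZMod 2) (m : ℕ) (hm : m < s.degree) :
    homogeneousComponent m (Sq σ (monomial s c)) = 0 := by
  ext u
  rw [coeff_homogeneousComponent, coeff_zero]
  split_ifs with h1
  · rw [coeff_sq_monomial, if_neg]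
    intro hle
    obtain ⟨t, rfl⟩ := le_iff_exists_add.mp hle
    have := degree_add' s t
    omega
  · rfl

private lemma hc_sq_monomial_hi (s : σ →₀ ℕ) (c : ZMod 2) (m : ℕ) (hm : m > 2 * s.degree) :
    homogeneousComponent m (Sq σ (monomial s c)) = 0 := by
  apply homogeneousComponent_eq_zero
  calc (Sq σ (monomial s c)).totalDegree
      = ((monomial s c : MvPolynomial σ (ZMod 2)) * Rr s).totalDegree := by
        rw [sq_monomial]
    _ ≤ (monomial s c : MvPolynomial σ (ZMod 2)).totalDegree + (Rr s).totalDegree :=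
        totalDegree_mul _ _
    _ ≤ s.degree + s.degree := by
        gcongr
        · exact (totalDegree_monomial_le _ _).trans (by rw [Finsupp.degree]; exact le_rfl)
        · exact totalDegree_Rr s
    _ < m := by omega

end Aux

/-- `Sq⁰ f = f`, and the components of `Sq f` outside degrees `[d, 2d]`
vanish. -/
theorem sq_zero_eq_self_and_unstable (σ : Type*) (d : ℕ)
    (f : MvPolynomial σ (ZMod 2)) (hf : f.IsHomogeneous d) :
    MvPolynomial.homogeneousComponent d (Sq σ f) = f ∧
      ∀ m : ℕ, m < d ∨ m > 2 * d →
        MvPolynomial.homogeneousComponent m (Sq σ f) = 0 := by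
  have hdeg : ∀ s ∈ f.support, Finsupp.degree s = d := by
    intro s hs
    have := hf (mem_support_iff.mp hs)
    rwa [Finsupp.degree_eq_weight_one]
  have hsum : f = ∑ s ∈ f.support, monomial s (coeff s f) :=
    (support_sum_monomial_coeff f).symm
  constructor
  · conv_lhs => rw [hsum]
    rw [map_sum, map_sum]
    rw [Finset.sum_congr rfl fun s hs => ?_]
    · exact hsum.symm
    · rw [← hdeg s hs, hc_sq_monomial_self]
  · intro m hm
    conv_lhs => rw [hsum]
    rw [map_sum, map_sum]
    apply Finset.sum_eq_zero
    intro s hs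
    rcases hm with hm | hm
    · exact hc_sq_monomial_lo _ _ _ (by rw [hdeg s hs]; exact hm)
    · exact hc_sq_monomial_hi _ _ _ (by rw [hdeg s hs]; exact hm)
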